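/- Let Σ₁ = Σ_{k=1}^r γ_k v_k v_k^T with orthonormal v_k and γ₁ ≥ … ≥ γ_r > 0. Let Π and \hat{Π} be orthogonal projections onto span(v₁,…,v_{j−1}) and onto span of another orthonormal family (of size j−1), and set Σ_j = (I−Π)Σ₁(I−Π), \hat{Σ}_j = (I−\hat{Π})Σ₁(I−\hat{Π}). Then ‖\hat{Σ}_j − Σ_j‖_F ≤ 2γ_j ‖Π − \hat{Π}‖_F + γ₁ ‖Π − \hat{Π}‖_F². -/

import Mathlib

open BigOperators Matrix
open scoped Classical

noncomputable def enorm {p : ℕ} (v : Fin p → ℝ) : ℝ := Real.sqrt (∑ i, (v i) ^ 2)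

noncomputable def fnorm {p : ℕ} (A : Matrix (Fin p) (Fin p) ℝ) : ℝ :=
  Real.sqrt (∑ i, ∑ j, (A i j) ^ 2)

def outer {p : ℕ} (u v : Fin p → ℝ) : Matrix (Fin p) (Fin p) ℝ :=
  Matrix.of fun i j => u i * v j

lemma fnorm_nonneg' {p : ℕ} (A : Matrix (Fin p) (Fin p) ℝ) : 0 ≤ fnorm A :=
  Real.sqrt_nonneg _

lemma fnorm_sq {p : ℕ} (A : Matrix (Fin p) (Fin p) ℝ) :
    fnorm A ^ 2 = ∑ i, ∑ j, (A i j) ^ 2 := by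
  rw [fnorm, Real.sq_sqrt]; positivity

lemma fnorm_zero {p : ℕ} : fnorm (0 : Matrix (Fin p) (Fin p) ℝ) = 0 := by
  simp [fnorm]

lemma fnorm_eq_norm {p : ℕ} (A : Matrix (Fin p) (Fin p) ℝ) :
    fnorm A = ‖(WithLp.equiv 2 (Fin p × Fin p → ℝ)).symm (fun ij => A ij.1 ij.2)‖ := by
  rw [EuclideanSpace.norm_eq, fnorm, Fintype.sum_prod_type]
  simp [sq_abs]

lemma fnorm_triangle {p : ℕ} (A B : Matrix (Fin p) (Fin p) ℝ) :
    fnorm (A + B) ≤ fnorm A + fnorm B := by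
  rw [fnorm_eq_norm, fnorm_eq_norm, fnorm_eq_norm]
  have := norm_add_le ((WithLp.equiv 2 (Fin p × Fin p → ℝ)).symm fun ij => A ij.1 ij.2)
    ((WithLp.equiv 2 (Fin p × Fin p → ℝ)).symm fun ij => B ij.1 ij.2)
  have e : (WithLp.equiv 2 (Fin p × Fin p → ℝ)).symm (fun ij => (A + B) ij.1 ij.2) =
      (WithLp.equiv 2 (Fin p × Fin p → ℝ)).symm (fun ij => A ij.1 ij.2) +
        (WithLp.equiv 2 (Fin p × Fin p → ℝ)).symm (fun ij => B ij.1 ij.2) := rfl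
  rw [e]; exact this

lemma fnorm_sum_le {p r : ℕ} (T : Finset (Fin r)) (f : Fin r → Matrix (Fin p) (Fin p) ℝ) :
    fnorm (∑ k ∈ T, f k) ≤ ∑ k ∈ T, fnorm (f k) := by
  classical
  induction T using Finset.induction with
  | empty => simp [fnorm_zero]
  | insert a s h ih =>
    rw [Finset.sum_insert h, Finset.sum_insert h]
    exact le_trans (fnorm_triangle _ _) (by linarith)

lemma fnorm_transpose {p : ℕ} (A : Matrix (Fin p) (Fin p) ℝ) : fnorm Aᵀ = fnorm A := by
  rw [fnorm, fnorm, Finset.sum_comm]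
  simp [Matrix.transpose_apply]

lemma fnorm_smul {p : ℕ} (c : ℝ) (A : Matrix (Fin p) (Fin p) ℝ) :
    fnorm (c • A) = |c| * fnorm A := by
  rw [fnorm, fnorm]
  have : ∀ i j, ((c • A) i j) ^ 2 = c ^ 2 * (A i j) ^ 2 := by intro i j; simp [mul_pow]
  simp only [this, ← Finset.mul_sum]
  rw [Real.sqrt_mul (sq_nonneg c), Real.sqrt_sq_eq_abs]

lemma fnorm_outer_self {p : ℕ} (u : Fin p → ℝ) :
    fnorm (outer u u) = ∑ i, (u i) ^ 2 := by
  rw [fnorm]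
  have : ∀ i : Fin p, ∑ j, ((outer u u) i j) ^ 2 = (u i)^2 * ∑ j, (u j)^2 := by
    intro i; rw [Finset.mul_sum]; apply Finset.sum_congr rfl; intro jj _
    simp [outer]; ring
  simp only [this, ← Finset.sum_mul]
  rw [← sq, Real.sqrt_sq (by positivity)]

lemma outer_mul_outer {p : ℕ} (u v w z : Fin p → ℝ) :
    outer u v * outer w z = (v ⬝ᵥ w) • outer u z := by
  ext i j
  simp [outer, Matrix.mul_apply, dotProduct, Finset.mul_sum, Finset.sum_mul]
  apply Finset.sum_congr rfl
  intro m _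
  ring

lemma mul_outer {p : ℕ} (M : Matrix (Fin p) (Fin p) ℝ) (u w : Fin p → ℝ) :
    M * outer u w = outer (M.mulVec u) w := by
  ext i j
  simp [outer, Matrix.mul_apply, Matrix.mulVec, dotProduct, Finset.sum_mul, mul_assoc]

lemma outer_mul {p : ℕ} (M : Matrix (Fin p) (Fin p) ℝ) (u w : Fin p → ℝ) :
    outer u w * M = outer u (Mᵀ.mulVec w) := by
  ext i j
  simp [outer, Matrix.mul_apply, Matrix.mulVec, dotProduct, Finset.mul_sum, Matrix.transpose_apply]
  apply Finset.sum_congr rfl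
  intro m _
  ring

lemma outer_transpose {p : ℕ} (u w : Fin p → ℝ) : (outer u w)ᵀ = outer w u := by
  ext i j; simp [outer, mul_comm]

lemma bessel {p r : ℕ} (v : Fin r → Fin p → ℝ)
    (hortho : ∀ k l, v k ⬝ᵥ v l = if k = l then (1 : ℝ) else 0) (x : Fin p → ℝ) :
    ∑ k, (x ⬝ᵥ v k) ^ 2 ≤ ∑ m, (x m) ^ 2 := by
  set v' : Fin r → EuclideanSpace ℝ (Fin p) := fun k => (WithLp.equiv 2 _).symm (v k) with hv'
  have hon : Orthonormal ℝ v' := by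
    rw [orthonormal_iff_ite]
    intro k l
    have := hortho k l
    rw [dotProduct_comm] at this
    simpa [v', PiLp.inner_apply, dotProduct, RCLike.inner_apply] using this
  have h := hon.sum_inner_products_le (s := Finset.univ) ((WithLp.equiv 2 _).symm x)
  have h1 : ∀ k, (inner ℝ (v' k) ((WithLp.equiv 2 (Fin p → ℝ)).symm x) : ℝ) = x ⬝ᵥ v k := by
    intro k
    simp [v', PiLp.inner_apply, dotProduct, RCLike.inner_apply, mul_comm]
  have h2 : ‖(WithLp.equiv 2 (Fin p → ℝ)).symm x‖ ^ 2 = ∑ m, (x m) ^ 2 := by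
    rw [EuclideanSpace.norm_eq, Real.sq_sqrt (by positivity)]
    simp [sq_abs]
  calc ∑ k, (x ⬝ᵥ v k) ^ 2
      = ∑ k, ‖(inner ℝ (v' k) ((WithLp.equiv 2 (Fin p → ℝ)).symm x) : ℝ)‖ ^ 2 := by
        simp only [Real.norm_eq_abs, sq_abs, h1]
    _ ≤ ‖(WithLp.equiv 2 (Fin p → ℝ)).symm x‖ ^ 2 := h
    _ = ∑ m, (x m) ^ 2 := h2

lemma sum_sq_mulVec_le {p r : ℕ} (v : Fin r → Fin p → ℝ)
    (hortho : ∀ k l, v k ⬝ᵥ v l = if k = l then (1 : ℝ) else 0)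
    (E : Matrix (Fin p) (Fin p) ℝ) :
    ∑ k : Fin r, ∑ i, (E.mulVec (v k) i) ^ 2 ≤ fnorm E ^ 2 := by
  rw [fnorm_sq, Finset.sum_comm]
  apply Finset.sum_le_sum
  intro i _
  have : ∀ k, E.mulVec (v k) i = (E i) ⬝ᵥ v k := fun k => rfl
  simp only [this]
  exact bessel v hortho (E i)

lemma fnorm_sum_outer_sq {p r : ℕ} (v : Fin r → Fin p → ℝ)
    (hortho : ∀ k l, v k ⬝ᵥ v l = if k = l then (1 : ℝ) else 0)
    (T : Finset (Fin r)) (c : Fin r → ℝ) (u : Fin r → Fin p → ℝ) :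
    (∑ i, ∑ j, ((∑ k ∈ T, c k • outer (u k) (v k)) i j) ^ 2)
      = ∑ k ∈ T, (c k) ^ 2 * (∑ i, (u k i) ^ 2) := by
  have key : ∀ i : Fin p, ∑ j, ((∑ k ∈ T, c k • outer (u k) (v k)) i j) ^ 2
      = ∑ k ∈ T, (c k)^2 * (u k i)^2 := by
    intro i
    have expand : ∀ j, (∑ k ∈ T, c k • outer (u k) (v k)) i j
        = ∑ k ∈ T, c k * u k i * v k j := by
      intro j
      rw [Matrix.sum_apply]
      apply Finset.sum_congr rfl
      intro k _
      simp [outer]; ring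
    calc ∑ j, ((∑ k ∈ T, c k • outer (u k) (v k)) i j) ^ 2
        = ∑ j, ∑ k ∈ T, ∑ l ∈ T, (c k * u k i * v k j) * (c l * u l i * v l j) := by
          apply Finset.sum_congr rfl; intro jj _
          rw [expand, sq, Finset.sum_mul_sum]
      _ = ∑ k ∈ T, ∑ l ∈ T, (c k * u k i) * (c l * u l i) * (v k ⬝ᵥ v l) := by
          rw [Finset.sum_comm]
          apply Finset.sum_congr rfl; intro k _
          rw [Finset.sum_comm]
          apply Finset.sum_congr rfl; intro l _
          rw [dotProduct, Finset.mul_sum]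
          apply Finset.sum_congr rfl; intro jj _
          ring
      _ = ∑ k ∈ T, (c k)^2 * (u k i)^2 := by
          apply Finset.sum_congr rfl; intro k hk
          rw [Finset.sum_eq_single k]
          · rw [hortho]; simp; ring
          · intro l _ hl; rw [hortho]; simp [Ne.symm hl]
          · intro h; exact absurd hk h
  rw [Finset.sum_congr rfl (fun i _ => key i), Finset.sum_comm]
  apply Finset.sum_congr rfl
  intro k _
  rw [Finset.mul_sum]

lemma le_of_sq_le_sq' (a b : ℝ) (ha : 0 ≤ a) (hb : 0 ≤ b) (h : a ^ 2 ≤ b ^ 2) : a ≤ b := by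
  nlinarith

theorem stmt9 {p r : ℕ} (γ : Fin r → ℝ) (v : Fin r → Fin p → ℝ)
    (hortho : ∀ k l, v k ⬝ᵥ v l = if k = l then (1 : ℝ) else 0)
    (hmono : Antitone γ) (hpos : ∀ k, 0 < γ k)
    (S : Matrix (Fin p) (Fin p) ℝ) (hS : S = ∑ k, γ k • outer (v k) (v k))
    (j : ℕ) (hj1 : 1 ≤ j) (hjr : j ≤ r)
    (Pm : Matrix (Fin p) (Fin p) ℝ)
    (hP : Pm = ∑ k ∈ Finset.univ.filter (fun k : Fin r => (k : ℕ) < j - 1), outer (v k) (v k))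
    (Q : Matrix (Fin p) (Fin p) ℝ) (hQsymm : Q.IsSymm) (hQproj : Q * Q = Q)
    (hQrank : Q.rank = j - 1) :
    fnorm (((1 : Matrix (Fin p) (Fin p) ℝ) - Q) * S * ((1 : Matrix (Fin p) (Fin p) ℝ) - Q) -
        ((1 : Matrix (Fin p) (Fin p) ℝ) - Pm) * S * ((1 : Matrix (Fin p) (Fin p) ℝ) - Pm)) ≤
      2 * γ ⟨j - 1, by omega⟩ * fnorm (Pm - Q) + γ ⟨0, by omega⟩ * (fnorm (Pm - Q)) ^ 2 := by
  set E : Matrix (Fin p) (Fin p) ℝ := Pm - Q with hE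
  set T : Finset (Fin r) := Finset.univ.filter (fun k : Fin r => ¬ ((k : ℕ) < j - 1)) with hT
  have hPsymm : Pmᵀ = Pm := by
    rw [hP, Matrix.transpose_sum]
    exact Finset.sum_congr rfl fun k _ => outer_transpose _ _
  have hSsymm : Sᵀ = S := by
    rw [hS, Matrix.transpose_sum]
    apply Finset.sum_congr rfl
    intro k _
    rw [Matrix.transpose_smul, outer_transpose]
  have hEsymm : Eᵀ = E := by
    rw [hE, Matrix.transpose_sub, hPsymm, hQsymm.eq]
  -- S * (1 - Pm)
  have hSP : S * ((1 : Matrix (Fin p) (Fin p) ℝ) - Pm) = ∑ k ∈ T, γ k • outer (v k) (v k) := by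
    have hmul : S * Pm
        = ∑ k ∈ Finset.univ.filter (fun k : Fin r => (k : ℕ) < j - 1), γ k • outer (v k) (v k) := by
      rw [hS, hP, Finset.sum_mul]
      have : ∀ k : Fin r, (γ k • outer (v k) (v k)) *
          (∑ l ∈ Finset.univ.filter (fun l : Fin r => (l : ℕ) < j - 1), outer (v l) (v l))
          = if (k : ℕ) < j - 1 then γ k • outer (v k) (v k) else 0 := by
        intro k
        rw [Finset.mul_sum]
        have : ∀ l : Fin r, (γ k • outer (v k) (v k)) * outer (v l) (v l)
            = if k = l then γ k • outer (v k) (v l) else 0 := by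
          intro l
          rw [smul_mul_assoc, outer_mul_outer, hortho]
          by_cases h : k = l <;> simp [h]
        simp only [this]
        rw [Finset.sum_ite_eq (Finset.univ.filter (fun l : Fin r => (l : ℕ) < j - 1)) k
          (fun l => γ k • outer (v k) (v l))]
        simp [Finset.mem_filter]
      simp only [this]
      exact (Finset.sum_filter _ _).symm
    rw [mul_sub, mul_one, hmul, hS]
    rw [← Finset.sum_filter_add_sum_filter_not Finset.univ (fun k : Fin r => (k : ℕ) < j - 1)
      (fun k => γ k • outer (v k) (v k))]
    abel
  -- decomposition
  have hdecomp : ((1 : Matrix (Fin p) (Fin p) ℝ) - Q) * S * ((1 : Matrix (Fin p) (Fin p) ℝ) - Q) -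
        ((1 : Matrix (Fin p) (Fin p) ℝ) - Pm) * S * ((1 : Matrix (Fin p) (Fin p) ℝ) - Pm)
      = E * S * (1 - Pm) + (((1 : Matrix (Fin p) (Fin p) ℝ) - Pm) * S * E + E * S * E) := by
    rw [hE]; noncomm_ring
  -- Term 1
  have hT1 : E * S * ((1 : Matrix (Fin p) (Fin p) ℝ) - Pm)
      = ∑ k ∈ T, γ k • outer (E.mulVec (v k)) (v k) := by
    rw [mul_assoc, hSP, Finset.mul_sum]
    apply Finset.sum_congr rfl
    intro k _
    rw [mul_smul_comm, mul_outer]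
  -- Term 2 is transpose of Term 1
  have hT2 : ((1 : Matrix (Fin p) (Fin p) ℝ) - Pm) * S * E = (E * S * (1 - Pm))ᵀ := by
    rw [Matrix.transpose_mul, Matrix.transpose_mul, hSsymm, hEsymm, Matrix.transpose_sub,
      Matrix.transpose_one, hPsymm, ← mul_assoc]
  -- Term 3
  have hT3 : E * S * E = ∑ k : Fin r, γ k • outer (E.mulVec (v k)) (E.mulVec (v k)) := by
    rw [hS, Finset.mul_sum, Finset.sum_mul]
    apply Finset.sum_congr rfl
    intro k _
    rw [mul_smul_comm, mul_outer, smul_mul_assoc, outer_mul, hEsymm]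
  set g : ℝ := γ ⟨j - 1, by omega⟩ with hg
  set g0 : ℝ := γ ⟨0, by omega⟩ with hg0
  have hgpos : 0 < g := hpos _
  have hg0pos : 0 < g0 := hpos _
  have hfE : 0 ≤ fnorm E := fnorm_nonneg' E
  have hBes : ∑ k : Fin r, ∑ i, (E.mulVec (v k) i) ^ 2 ≤ fnorm E ^ 2 :=
    sum_sq_mulVec_le v hortho E
  have hsknn : ∀ k : Fin r, 0 ≤ ∑ i, (E.mulVec (v k) i) ^ 2 := by
    intro k; positivity
  -- bound on term 1
  have bound1 : fnorm (E * S * ((1 : Matrix (Fin p) (Fin p) ℝ) - Pm)) ≤ g * fnorm E := by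
    apply le_of_sq_le_sq' _ _ (fnorm_nonneg' _) (by positivity)
    rw [hT1, fnorm_sq, fnorm_sum_outer_sq v hortho]
    calc ∑ k ∈ T, (γ k) ^ 2 * (∑ i, (E.mulVec (v k) i) ^ 2)
        ≤ ∑ k ∈ T, g ^ 2 * (∑ i, (E.mulVec (v k) i) ^ 2) := by
          apply Finset.sum_le_sum
          intro k hk
          apply mul_le_mul_of_nonneg_right _ (hsknn k)
          have hk' : ¬ ((k : ℕ) < j - 1) := by
            rw [hT] at hk; exact (Finset.mem_filter.mp hk).2
          have hle : (⟨j - 1, by omega⟩ : Fin r) ≤ k := by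
            rw [Fin.le_def]; simp only [Fin.val_mk]; omega
          exact pow_le_pow_left₀ (le_of_lt (hpos k)) (hmono hle) 2
      _ = g ^ 2 * ∑ k ∈ T, (∑ i, (E.mulVec (v k) i) ^ 2) := by rw [Finset.mul_sum]
      _ ≤ g ^ 2 * ∑ k : Fin r, (∑ i, (E.mulVec (v k) i) ^ 2) := by
          apply mul_le_mul_of_nonneg_left _ (sq_nonneg g)
          exact Finset.sum_le_sum_of_subset_of_nonneg (Finset.subset_univ T)
            (fun k _ _ => hsknn k)
      _ ≤ g ^ 2 * fnorm E ^ 2 := mul_le_mul_of_nonneg_left hBes (sq_nonneg g)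
      _ = (g * fnorm E) ^ 2 := by ring
  have bound2 : fnorm (((1 : Matrix (Fin p) (Fin p) ℝ) - Pm) * S * E) ≤ g * fnorm E := by
    rw [hT2, fnorm_transpose]; exact bound1
  have bound3 : fnorm (E * S * E) ≤ g0 * fnorm E ^ 2 := by
    rw [hT3]
    calc fnorm (∑ k : Fin r, γ k • outer (E.mulVec (v k)) (E.mulVec (v k)))
        ≤ ∑ k : Fin r, fnorm (γ k • outer (E.mulVec (v k)) (E.mulVec (v k))) :=
          fnorm_sum_le _ _
      _ = ∑ k : Fin r, γ k * (∑ i, (E.mulVec (v k) i) ^ 2) := by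
          apply Finset.sum_congr rfl
          intro k _
          rw [fnorm_smul, fnorm_outer_self, abs_of_pos (hpos k)]
      _ ≤ ∑ k : Fin r, g0 * (∑ i, (E.mulVec (v k) i) ^ 2) := by
          apply Finset.sum_le_sum
          intro k _
          apply mul_le_mul_of_nonneg_right _ (hsknn k)
          exact hmono (by rw [Fin.le_def]; simp only [Fin.val_mk]; exact Nat.zero_le _)
      _ = g0 * ∑ k : Fin r, (∑ i, (E.mulVec (v k) i) ^ 2) := by rw [Finset.mul_sum]
      _ ≤ g0 * fnorm E ^ 2 := mul_le_mul_of_nonneg_left hBes (le_of_lt hg0pos)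
  rw [hdecomp]
  calc fnorm (E * S * (1 - Pm) + (((1 : Matrix (Fin p) (Fin p) ℝ) - Pm) * S * E + E * S * E))
      ≤ fnorm (E * S * (1 - Pm)) +
        fnorm (((1 : Matrix (Fin p) (Fin p) ℝ) - Pm) * S * E + E * S * E) :=
        fnorm_triangle _ _
    _ ≤ fnorm (E * S * (1 - Pm)) +
        (fnorm (((1 : Matrix (Fin p) (Fin p) ℝ) - Pm) * S * E) + fnorm (E * S * E)) := by
        have := fnorm_triangle (((1 : Matrix (Fin p) (Fin p) ℝ) - Pm) * S * E) (E * S * E)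
        linarith
    _ ≤ 2 * g * fnorm E + g0 * fnorm E ^ 2 := by linarith
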